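/- Let Q be a bounded, positive, self-adjoint operator on a complex Hilbert space H, let γ > 0 and T a positive even integer with γ‖Q‖ < 1/4, and let β ≥ 0. There exists a constant c_β < ∞, depending only on β, such that for every R > 0 and every h ∈ H with ‖h‖_H ≤ R: ‖Ḡ_T(Q) Q (Q^{β} h)‖_H ≤ c_β R (γT)^{−β} + ‖Q^{β} h‖_H. (This is Proposition C.8, part 3: Ḡ_T(Q) Q Q^{β} h = L^s g̃_T under the source condition of the preconditioning setting.) -/

import Mathlib

/-- Fractional power `A^r` (for `r : ℝ`) of a bounded operator, via the continuous
functional calculus for self-adjoint operators (real power `x ↦ x ^ r`). -/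
noncomputable def opPow {H : Type*} [NormedAddCommGroup H] [InnerProductSpace ℂ H]
    [CompleteSpace H] (A : H →L[ℂ] H) (r : ℝ) : H →L[ℂ] H :=
  cfc (fun x : ℝ => x ^ r) A

/-- The tail-averaged gradient-descent filter operator
`Ḡ_T(Q) = (2/T) ∑_{t=T/2+1}^{T} γ ∑_{k=0}^{t-1} (I - γQ)^k`. -/
noncomputable def Gbar {H : Type*} [NormedAddCommGroup H] [InnerProductSpace ℂ H]
    [CompleteSpace H] (γ : ℝ) (T : ℕ) (Q : H →L[ℂ] H) : H →L[ℂ] H :=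
  (2 / (T : ℂ)) • ∑ t ∈ Finset.Ioc (T / 2) T,
    (γ : ℂ) • ∑ k ∈ Finset.range t, (1 - (γ : ℂ) • Q) ^ k

/-- The tail-averaged gradient-descent residual operator
`R̄_T(Q) = (2/T) ∑_{t=T/2+1}^{T} (I - γQ)^t`. -/
noncomputable def Rbar {H : Type*} [NormedAddCommGroup H] [InnerProductSpace ℂ H]
    [CompleteSpace H] (γ : ℝ) (T : ℕ) (Q : H →L[ℂ] H) : H →L[ℂ] H :=
  (2 / (T : ℂ)) • ∑ t ∈ Finset.Ioc (T / 2) T, (1 - (γ : ℂ) • Q) ^ t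

/-- Analysis lemma: `u^β e^{-u/2} ≤ 1 + n! 2^n` for `0 ≤ β ≤ n`, `u ≥ 0`. -/
lemma aux_rpow_exp_bound (n : ℕ) (β : ℝ) (hβ : 0 ≤ β) (hβn : β ≤ n)
    (u : ℝ) (hu : 0 ≤ u) :
    u ^ β * Real.exp (-(u/2)) ≤ 1 + (n.factorial : ℝ) * 2 ^ n := by
  have hfac : (0:ℝ) < (n.factorial : ℝ) * 2 ^ n := by positivity
  rcases le_or_gt u 1 with h1 | h1
  · have h2 : u ^ β ≤ 1 := Real.rpow_le_one hu h1 hβ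
    have h3 : Real.exp (-(u/2)) ≤ 1 := Real.exp_le_one_iff.mpr (by linarith)
    nlinarith [Real.exp_pos (-(u/2)), Real.rpow_nonneg hu β]
  · have hu0 : 0 < u := by linarith
    have h2 : u ^ β ≤ u ^ (n:ℝ) := Real.rpow_le_rpow_of_exponent_le h1.le hβn
    rw [Real.rpow_natCast] at h2
    have h3 : (u/2) ^ n / n.factorial ≤ Real.exp (u/2) :=
      Real.pow_div_factorial_le_exp (x := u/2) (by linarith) n
    rw [div_pow] at h3
    have h4 : u ^ n ≤ (n.factorial : ℝ) * 2 ^ n * Real.exp (u/2) := by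
      have h8 := mul_le_mul_of_nonneg_left h3 hfac.le
      calc u ^ n = (n.factorial : ℝ) * 2 ^ n * (u ^ n / 2 ^ n / n.factorial) := by
            field_simp
        _ ≤ (n.factorial : ℝ) * 2 ^ n * Real.exp (u/2) := h8
    have h5 : u ^ n * Real.exp (-(u/2)) ≤ (n.factorial : ℝ) * 2 ^ n := by
      rw [Real.exp_neg, ← div_eq_mul_inv, div_le_iff₀ (Real.exp_pos _)]
      exact h4
    calc u ^ β * Real.exp (-(u/2)) ≤ u ^ n * Real.exp (-(u/2)) :=
          mul_le_mul_of_nonneg_right h2 (Real.exp_pos _).le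
      _ ≤ (n.factorial : ℝ) * 2 ^ n := h5
      _ ≤ 1 + (n.factorial : ℝ) * 2 ^ n := by linarith

lemma gbar_mul_q {H : Type*} [NormedAddCommGroup H] [InnerProductSpace ℂ H]
    [CompleteSpace H] (γ : ℝ) (T : ℕ) (Q : H →L[ℂ] H) (hT : 0 < T) (hTe : Even T) :
    Gbar γ T Q * Q = 1 - Rbar γ T Q := by
  obtain ⟨m, hm⟩ := hTe
  have hm0 : 0 < m := by omega
  have hT2 : T / 2 = m := by omega
  unfold Gbar Rbar
  rw [smul_mul_assoc, Finset.sum_mul]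
  have key : ∀ t : ℕ, ((γ : ℂ) • ∑ k ∈ Finset.range t, (1 - (γ : ℂ) • Q) ^ k) * Q
      = 1 - (1 - (γ : ℂ) • Q) ^ t := by
    intro t
    set A := 1 - (γ : ℂ) • Q with hA
    have h1 : (γ : ℂ) • Q = 1 - A := by rw [hA, sub_sub_cancel]
    rw [smul_mul_assoc, ← mul_smul_comm, h1]
    have h2 := geom_sum_mul A t
    calc (∑ k ∈ Finset.range t, A ^ k) * (1 - A)
        = -((∑ k ∈ Finset.range t, A ^ k) * (A - 1)) := by rw [← mul_neg, neg_sub]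
      _ = 1 - A ^ t := by rw [h2, neg_sub]
  simp_rw [key]
  rw [Finset.sum_sub_distrib, Finset.sum_const, smul_sub]
  have hcard : (Finset.Ioc (T / 2) T).card = m := by
    rw [Nat.card_Ioc]; omega
  rw [hcard]
  have hone : (2 / (T : ℂ)) • (m • (1 : H →L[ℂ] H)) = 1 := by
    rw [← Nat.cast_smul_eq_nsmul ℂ, smul_smul]
    have hTne : (T : ℂ) ≠ 0 := Nat.cast_ne_zero.mpr hT.ne'
    have : 2 / (T : ℂ) * m = 1 := by
      have hTm : (T : ℂ) = 2 * m := by rw [hm]; push_cast; ring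
      rw [hTm, div_mul_eq_mul_div, mul_comm]
      exact div_self (show ((m:ℂ)*2) ≠ 0 from
        mul_ne_zero (Nat.cast_ne_zero.mpr hm0.ne') two_ne_zero)
    rw [this, one_smul]
  rw [hone]

lemma rbar_mul_opPow {H : Type*} [NormedAddCommGroup H] [InnerProductSpace ℂ H]
    [CompleteSpace H] (γ : ℝ) (T : ℕ) (Q : H →L[ℂ] H) (hQ : IsSelfAdjoint Q)
    (β : ℝ) (hβ : 0 ≤ β) :
    Rbar γ T Q * opPow Q β =
      cfc (fun x : ℝ => (2 / (T:ℝ)) * ∑ t ∈ Finset.Ioc (T / 2) T, (1 - γ*x)^t * x ^ β) Q := by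
  have hpβ : Continuous (fun x : ℝ => x ^ β) := Real.continuous_rpow_const hβ
  have hA : ∀ t : ℕ, (1 - (γ:ℂ) • Q) ^ t = cfc (fun x : ℝ => (1 - γ*x)^t) Q := by
    intro t
    rw [cfc_pow (fun x : ℝ => 1 - γ*x) t Q (by fun_prop)]
    congr 1
    have h1 : cfc (fun x : ℝ => (1:ℝ) - γ*x) Q
        = cfc (fun _ : ℝ => (1:ℝ)) Q - cfc (fun x : ℝ => γ*x) Q :=
      cfc_sub (fun _ : ℝ => (1:ℝ)) (fun x : ℝ => γ*x) Q (by fun_prop) (by fun_prop)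
    rw [h1]
    have h2 : cfc (fun _ : ℝ => (1:ℝ)) Q = 1 := cfc_one ℝ Q
    have h3 : cfc (fun x : ℝ => γ*x) Q = γ • Q := cfc_const_mul_id γ Q
    rw [h2, h3, Complex.coe_smul]
  unfold Rbar opPow
  rw [smul_mul_assoc, Finset.sum_mul]
  have hmul : ∀ t : ℕ, (1 - (γ:ℂ) • Q) ^ t * cfc (fun x : ℝ => x ^ β) Q
      = cfc (fun x : ℝ => (1 - γ*x)^t * x ^ β) Q := by
    intro t
    rw [hA t, ← cfc_mul _ _ Q (by fun_prop) hpβ.continuousOn]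
  simp_rw [hmul]
  rw [← cfc_sum (fun t : ℕ => fun x : ℝ => (1 - γ*x)^t * x ^ β) Q (Finset.Ioc (T/2) T)
    (fun i _ => (by fun_prop : Continuous (fun x : ℝ => (1 - γ*x)^i * x ^ β)).continuousOn)]
  have hco : (2 / (T:ℂ)) = (((2 / (T:ℝ)) : ℝ) : ℂ) := by push_cast; ring
  have hsum : ContinuousOn (∑ i ∈ Finset.Ioc (T/2) T, fun x : ℝ => (1-γ*x)^i * x^β)
      (spectrum ℝ Q) := by
    have he : (∑ i ∈ Finset.Ioc (T/2) T, fun x : ℝ => (1-γ*x)^i * x^β)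
        = fun x : ℝ => ∑ i ∈ Finset.Ioc (T/2) T, (1-γ*x)^i * x^β := by
      ext x; simp [Finset.sum_apply]
    rw [he]
    exact (continuous_finset_sum _ (fun i _ => by fun_prop)).continuousOn
  rw [hco, Complex.coe_smul, ← cfc_const_mul (2 / (T:ℝ)) _ Q hsum]
  apply cfc_congr
  intro x _
  simp [Finset.sum_apply]

/-- Proposition C.8, part 3.
For a bounded positive self-adjoint operator `Q`, `γ > 0`, a positive even integer
`T` with `γ‖Q‖ < 1/4`, and `β ≥ 0`, there is a constant `c_β` (depending only
on `β`) such that for every `R > 0` and every `h` with `‖h‖ ≤ R`: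
`‖Ḡ_T(Q) Q (Q^β h)‖ ≤ c_β R (γT)^{-β} + ‖Q^β h‖`. -/
theorem source_condition_iterate_bound
    {H : Type*} [NormedAddCommGroup H] [InnerProductSpace ℂ H] [CompleteSpace H]
    (β : ℝ) (hβ : 0 ≤ β) :
    ∃ c : ℝ, ∀ Q : H →L[ℂ] H, Q.IsPositive →
      ∀ (γ : ℝ) (T : ℕ), 0 < γ → 0 < T → Even T → γ * ‖Q‖ < 1 / 4 →
      ∀ (R : ℝ), 0 < R → ∀ h : H, ‖h‖ ≤ R →
        ‖Gbar γ T Q (Q (opPow Q β h))‖ ≤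
          c * R * (γ * (T : ℝ)) ^ (-β) + ‖opPow Q β h‖ := by
  rcases subsingleton_or_nontrivial H with hH | hH
  · refine ⟨1, fun Q hQ γ T hγ hT hTe hnorm R hR h hh => ?_⟩
    have h0 : ∀ v : H, ‖v‖ = 0 := fun v => by
      rw [Subsingleton.elim v 0, norm_zero]
    rw [h0, h0]
    have : (0:ℝ) ≤ 1 * R * (γ * (T:ℝ)) ^ (-β) :=
      mul_nonneg (mul_nonneg zero_le_one hR.le) (Real.rpow_nonneg (by positivity) _)
    linarith
  set n := ⌈β⌉₊ with hn
  set C : ℝ := 1 + (n.factorial : ℝ) * 2 ^ n with hC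
  have hC0 : 0 < C := by positivity
  refine ⟨C, fun Q hQ γ T hγ hT hTe hnorm R hR h hh => ?_⟩
  have hsa : IsSelfAdjoint Q := hQ.isSelfAdjoint
  obtain ⟨m, hm⟩ := hTe
  have hm0 : 0 < m := by omega
  have hT2 : T / 2 = m := by omega
  have hγT : (0:ℝ) < γ * T := by positivity
  set X : ℝ := (γ * (T : ℝ)) ^ (-β) with hX
  have hX0 : 0 ≤ X := Real.rpow_nonneg hγT.le _
  -- pointwise bound on the spectrum
  have hptwise : ∀ x ∈ spectrum ℝ Q,
      ‖(2 / (T:ℝ)) * ∑ t ∈ Finset.Ioc (T / 2) T, (1 - γ*x)^t * x ^ β‖ ≤ C * X := by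
    intro x hx
    have hx0 : 0 ≤ x := spectrum_nonneg_of_nonneg
      ((ContinuousLinearMap.nonneg_iff_isPositive Q).mpr hQ) hx
    have hxQ : x ≤ ‖Q‖ := by
      have := spectrum.norm_le_norm_of_mem hx
      rwa [Real.norm_eq_abs, abs_of_nonneg hx0] at this
    have hγx : γ * x < 1/4 := lt_of_le_of_lt
      (mul_le_mul_of_nonneg_left hxQ hγ.le) hnorm
    have h1x : 0 ≤ 1 - γ * x := by nlinarith [mul_nonneg hγ.le hx0]
    have h1x1 : 1 - γ * x ≤ 1 := by nlinarith [mul_nonneg hγ.le hx0]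
    have hxβ : 0 ≤ x ^ β := Real.rpow_nonneg hx0 _
    -- bound each term in the sum
    have hterm : ∀ t ∈ Finset.Ioc (T/2) T, (1 - γ*x)^t * x ^ β ≤ (1-γ*x)^m * x ^ β := by
      intro t ht
      rw [Finset.mem_Ioc, hT2] at ht
      exact mul_le_mul_of_nonneg_right
        (pow_le_pow_of_le_one h1x h1x1 (le_of_lt ht.1)) hxβ
    have hsumle : ∑ t ∈ Finset.Ioc (T/2) T, (1 - γ*x)^t * x ^ β
        ≤ m * ((1-γ*x)^m * x ^ β) := by
      calc ∑ t ∈ Finset.Ioc (T/2) T, (1 - γ*x)^t * x ^ β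
          ≤ ∑ _t ∈ Finset.Ioc (T/2) T, (1-γ*x)^m * x ^ β := Finset.sum_le_sum hterm
        _ = m * ((1-γ*x)^m * x ^ β) := by
          rw [Finset.sum_const, Nat.card_Ioc, hT2]
          have : T - m = m := by omega
          rw [this, nsmul_eq_mul]
    have hsnn : (0:ℝ) ≤ ∑ t ∈ Finset.Ioc (T/2) T, (1 - γ*x)^t * x ^ β :=
      Finset.sum_nonneg fun t _ => mul_nonneg (pow_nonneg h1x t) hxβ
    have h2T : (0:ℝ) < 2 / (T:ℝ) := by positivity
    rw [Real.norm_eq_abs, abs_of_nonneg (mul_nonneg h2T.le hsnn)]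
    have hstep1 : (2 / (T:ℝ)) * ∑ t ∈ Finset.Ioc (T/2) T, (1 - γ*x)^t * x ^ β
        ≤ (1-γ*x)^m * x ^ β := by
      have := mul_le_mul_of_nonneg_left hsumle h2T.le
      have hTm : (2 / (T:ℝ)) * (m * ((1-γ*x)^m * x ^ β)) = (1-γ*x)^m * x ^ β := by
        have hT' : (T:ℝ) = 2 * m := by rw [hm]; push_cast; ring
        rw [hT']
        field_simp
      linarith [this, hTm ▸ this]
    -- now exponential bound
    set u : ℝ := γ * T * x with hu
    have hu0 : 0 ≤ u := by positivity
    have hexp1 : 1 - γ*x ≤ Real.exp (-(γ*x)) := by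
      nlinarith [Real.add_one_le_exp (-(γ*x))]
    have hstep2 : (1-γ*x)^m ≤ Real.exp (-(u/2)) := by
      calc (1-γ*x)^m ≤ (Real.exp (-(γ*x)))^m := pow_le_pow_left₀ h1x hexp1 m
        _ = Real.exp (m * -(γ*x)) := by rw [← Real.exp_nat_mul]
        _ = Real.exp (-(u/2)) := by
            congr 1
            have hT' : (T:ℝ) = 2 * m := by rw [hm]; push_cast; ring
            rw [hu, hT']; ring
    have hxβeq : x ^ β = u ^ β * X := by
      rw [hu, Real.mul_rpow hγT.le hx0, hX, mul_comm ((γ * (T:ℝ)) ^ β) (x ^ β), mul_assoc,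
        ← Real.rpow_add hγT, add_neg_cancel, Real.rpow_zero, mul_one]
    calc (2 / (T:ℝ)) * ∑ t ∈ Finset.Ioc (T / 2) T, (1 - γ*x)^t * x ^ β
        ≤ (1-γ*x)^m * x ^ β := hstep1
      _ ≤ Real.exp (-(u/2)) * x ^ β := mul_le_mul_of_nonneg_right hstep2 hxβ
      _ = (u ^ β * Real.exp (-(u/2))) * X := by rw [hxβeq]; ring
      _ ≤ C * X := mul_le_mul_of_nonneg_right
          (aux_rpow_exp_bound n β hβ (Nat.le_ceil β) u hu0) hX0
  -- operator norm bound
  have hnormop : ‖Rbar γ T Q * opPow Q β‖ ≤ C * X := by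
    rw [rbar_mul_opPow γ T Q hsa β hβ]
    exact norm_cfc_le (by positivity) hptwise
  have heq : Gbar γ T Q (Q (opPow Q β h))
      = opPow Q β h - (Rbar γ T Q * opPow Q β) h := by
    calc Gbar γ T Q (Q (opPow Q β h)) = (Gbar γ T Q * Q) (opPow Q β h) := rfl
      _ = ((1 : H →L[ℂ] H) - Rbar γ T Q) (opPow Q β h) := by
          rw [gbar_mul_q γ T Q hT ⟨m, hm⟩]
      _ = opPow Q β h - (Rbar γ T Q * opPow Q β) h := by
          simp [ContinuousLinearMap.sub_apply, ContinuousLinearMap.mul_apply]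
  rw [heq]
  have hb : ‖(Rbar γ T Q * opPow Q β) h‖ ≤ C * X * R :=
    le_trans ((Rbar γ T Q * opPow Q β).le_opNorm h)
      (mul_le_mul hnormop hh (norm_nonneg h) (by positivity))
  have htri := norm_sub_le (opPow Q β h) ((Rbar γ T Q * opPow Q β) h)
  have : C * X * R = C * R * X := by ring
  linarith
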